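/- Let B be a bialgebra over K with m = Ker ε, and consider the horizontal differential δ_h^{p,q} : C^{p,q} → C^{p,q+1}, where C^{p,q} = Hom(B^{⊗q}, B^{⊗p}), given by δ_h^{p,q}(f) = λ^p ∘ (Id ⊗ f) + Σ_{i=1}^{q} (−1)^i f ∘ μ_i^q + (−1)^{q+1} ρ^p ∘ (f ⊗ Id). If f ∈ C^{p,q} factors through m (that is, f lies in the image of the embedding D^{p,q} ↪ C^{p,q}, where D^{p,q} = Hom(m^{⊗q}, m^{⊗p})), then δ_h^{p,q}(f) also factors through m. -/

import Mathlib

open TensorProduct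

namespace GBD

variable (K B : Type*) [Field K] [Ring B] [Bialgebra K B]

/-- The `n`-th tensor power `B^{⊗n}`. -/
abbrev T (n : ℕ) := PiTensorProduct K (fun _ : Fin n => B)

/-- Splitting off the first tensor factor: `B^{⊗(n+1)} ≃ B ⊗ B^{⊗n}`. -/
noncomputable def split (n : ℕ) : T K B (n + 1) ≃ₗ[K] B ⊗[K] T K B n :=
  ((PiTensorProduct.reindex K (fun _ : Fin (n+1) => B)
      ((finCongr (Nat.add_comm 1 n)).symm.trans finSumFinEquiv.symm)).trans
    (PiTensorProduct.tmulEquiv K B).symm).trans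
      (TensorProduct.congr (PiTensorProduct.subsingletonEquiv (0 : Fin 1))
        (LinearEquiv.refl K _))

/-- Splitting off the last tensor factor: `B^{⊗(n+1)} ≃ B^{⊗n} ⊗ B`. -/
noncomputable def splitLast (n : ℕ) : T K B (n + 1) ≃ₗ[K] T K B n ⊗[K] B :=
  ((PiTensorProduct.reindex K (fun _ : Fin (n+1) => B) finSumFinEquiv.symm).trans
    (PiTensorProduct.tmulEquiv K B).symm).trans
      (TensorProduct.congr (LinearEquiv.refl K _)
        (PiTensorProduct.subsingletonEquiv (0 : Fin 1)))

/-- Iterated comultiplication `Δ^{(n)} : B → B^{⊗n}` (with `Δ^{(0)} = ε`, `Δ^{(1)} = Id`). -/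
noncomputable def iterComul : (n : ℕ) → (B →ₗ[K] T K B n)
  | 0 => (PiTensorProduct.isEmptyEquiv (Fin 0)).symm.toLinearMap ∘ₗ
      (Coalgebra.counit (R := K) (A := B))
  | (n + 1) => (split K B n).symm.toLinearMap ∘ₗ
      LinearMap.lTensor B (iterComul n) ∘ₗ (Coalgebra.comul (R := K) (A := B))

/-- Componentwise comultiplication `B^{⊗n} → B^{⊗n} ⊗ B^{⊗n}`,
`b¹⊗⋯⊗bⁿ ↦ (b¹₍₁₎⊗⋯⊗bⁿ₍₁₎) ⊗ (b¹₍₂₎⊗⋯⊗bⁿ₍₂₎)`. -/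
noncomputable def comulT : (n : ℕ) → (T K B n →ₗ[K] T K B n ⊗[K] T K B n)
  | 0 => (TensorProduct.congr (PiTensorProduct.isEmptyEquiv (Fin 0)).symm
        (PiTensorProduct.isEmptyEquiv (Fin 0)).symm).toLinearMap ∘ₗ
      (TensorProduct.lid K K).symm.toLinearMap ∘ₗ
        (PiTensorProduct.isEmptyEquiv (Fin 0)).toLinearMap
  | (n + 1) =>
      (TensorProduct.congr (split K B n).symm (split K B n).symm).toLinearMap ∘ₗ
        (TensorProduct.tensorTensorTensorComm K B B (T K B n) (T K B n)).toLinearMap ∘ₗ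
          TensorProduct.map (Coalgebra.comul (R := K) (A := B)) (comulT n) ∘ₗ
            (split K B n).toLinearMap

/-- The product of all tensor factors, `B^{⊗n} → B`, `b¹⊗⋯⊗bⁿ ↦ b¹⋯bⁿ`. -/
noncomputable def prodT (n : ℕ) : T K B n →ₗ[K] B :=
  PiTensorProduct.lift (MultilinearMap.mkPiAlgebraFin K n B)

/-- `μ_i : B^{⊗(q+1)} → B^{⊗q}` multiplying the `i`-th and `(i+1)`-th factors
(`i` is 0-indexed here). -/
noncomputable def mulAt : (q : ℕ) → ℕ → (T K B (q + 1) →ₗ[K] T K B q)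
  | 0, _ => 0
  | (q + 1), 0 => (split K B q).symm.toLinearMap ∘ₗ
      LinearMap.rTensor (T K B q) (LinearMap.mul' K B) ∘ₗ
        (TensorProduct.assoc K B B (T K B q)).symm.toLinearMap ∘ₗ
          LinearMap.lTensor B (split K B q).toLinearMap ∘ₗ
            (split K B (q + 1)).toLinearMap
  | (q + 1), (i + 1) => (split K B q).symm.toLinearMap ∘ₗ
      LinearMap.lTensor B (mulAt q i) ∘ₗ (split K B (q + 1)).toLinearMap

/-- `Δ_j : B^{⊗p} → B^{⊗(p+1)}` applying `Δ` to the `j`-th factor (`j` is 0-indexed). -/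
noncomputable def comulAt : (p : ℕ) → ℕ → (T K B p →ₗ[K] T K B (p + 1))
  | 0, _ => 0
  | (p + 1), 0 => (split K B (p + 1)).symm.toLinearMap ∘ₗ
      LinearMap.lTensor B (split K B p).symm.toLinearMap ∘ₗ
        (TensorProduct.assoc K B B (T K B p)).toLinearMap ∘ₗ
          LinearMap.rTensor (T K B p) (Coalgebra.comul (R := K) (A := B)) ∘ₗ
            (split K B p).toLinearMap
  | (p + 1), (i + 1) => (split K B (p + 1)).symm.toLinearMap ∘ₗ
      LinearMap.lTensor B (comulAt p i) ∘ₗ (split K B p).toLinearMap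

/-- `λ^p : B^{⊗(p+1)} → B^{⊗p}`, `b¹⊗b²⊗⋯⊗b^{p+1} ↦ b¹₍₁₎b² ⊗ ⋯ ⊗ b¹₍ₚ₎b^{p+1}`. -/
noncomputable def lamMap (p : ℕ) : T K B (p + 1) →ₗ[K] T K B p :=
  LinearMap.mul' K (T K B p) ∘ₗ TensorProduct.map (iterComul K B p) LinearMap.id ∘ₗ
    (split K B p).toLinearMap

/-- `ρ^p : B^{⊗(p+1)} → B^{⊗p}`, `b¹⊗⋯⊗b^p⊗b^{p+1} ↦ b¹b^{p+1}₍₁₎ ⊗ ⋯ ⊗ b^p b^{p+1}₍ₚ₎`. -/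
noncomputable def rhoMap (p : ℕ) : T K B (p + 1) →ₗ[K] T K B p :=
  LinearMap.mul' K (T K B p) ∘ₗ TensorProduct.map LinearMap.id (iterComul K B p) ∘ₗ
    (splitLast K B p).toLinearMap

/-- `σ^q : B^{⊗q} → B^{⊗(q+1)}`, `b¹⊗⋯⊗b^q ↦ (b¹₍₁₎⋯b^q₍₁₎) ⊗ b¹₍₂₎ ⊗ ⋯ ⊗ b^q₍₂₎`. -/
noncomputable def sigmaMap (q : ℕ) : T K B q →ₗ[K] T K B (q + 1) :=
  (split K B q).symm.toLinearMap ∘ₗ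
    TensorProduct.map (prodT K B q) LinearMap.id ∘ₗ comulT K B q

/-- `τ^q : B^{⊗q} → B^{⊗(q+1)}`, `b¹⊗⋯⊗b^q ↦ b¹₍₁₎ ⊗ ⋯ ⊗ b^q₍₁₎ ⊗ (b¹₍₂₎⋯b^q₍₂₎)`. -/
noncomputable def tauMap (q : ℕ) : T K B q →ₗ[K] T K B (q + 1) :=
  (splitLast K B q).symm.toLinearMap ∘ₗ
    TensorProduct.map LinearMap.id (prodT K B q) ∘ₗ comulT K B q

/-- The horizontal (Hochschild-type) differential
`δ_h^{p,q} : Hom(B^{⊗q}, B^{⊗p}) → Hom(B^{⊗(q+1)}, B^{⊗p})`. -/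
noncomputable def deltaH (p q : ℕ) (f : T K B q →ₗ[K] T K B p) :
    T K B (q + 1) →ₗ[K] T K B p :=
  lamMap K B p ∘ₗ (split K B p).symm.toLinearMap ∘ₗ LinearMap.lTensor B f ∘ₗ
      (split K B q).toLinearMap
    + ∑ i ∈ Finset.range q, ((-1 : ℤ) ^ (i + 1)) • (f ∘ₗ mulAt K B q i)
    + ((-1 : ℤ) ^ (q + 1)) •
        (rhoMap K B p ∘ₗ (splitLast K B p).symm.toLinearMap ∘ₗ LinearMap.rTensor B f ∘ₗ
          (splitLast K B q).toLinearMap)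

/-- The vertical (coHochschild-type) differential
`δ_c^{p,q} : Hom(B^{⊗q}, B^{⊗p}) → Hom(B^{⊗q}, B^{⊗(p+1)})`. -/
noncomputable def deltaCv (p q : ℕ) (f : T K B q →ₗ[K] T K B p) :
    T K B q →ₗ[K] T K B (p + 1) :=
  (split K B p).symm.toLinearMap ∘ₗ LinearMap.lTensor B f ∘ₗ (split K B q).toLinearMap ∘ₗ
      sigmaMap K B q
    + ∑ j ∈ Finset.range p, ((-1 : ℤ) ^ (j + 1)) • (comulAt K B p j ∘ₗ f)
    + ((-1 : ℤ) ^ (p + 1)) •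
        ((splitLast K B p).symm.toLinearMap ∘ₗ LinearMap.rTensor B f ∘ₗ
          (splitLast K B q).toLinearMap ∘ₗ tauMap K B q)


/-- The augmentation ideal `m = ker ε`. -/
noncomputable def aug : Submodule K B := LinearMap.ker (Coalgebra.counit (R := K) (A := B))

/-- The projection `π : B → m`, `π(b) = b − ε(b)·1`. -/
noncomputable def projAug : B →ₗ[K] aug K B :=
  LinearMap.codRestrict (aug K B)
    (LinearMap.id - Algebra.linearMap K B ∘ₗ Coalgebra.counit)
    (fun b => by simp [aug, LinearMap.mem_ker])

/-- `f : B^{⊗q} → B^{⊗p}` factors through the augmentation ideal, i.e. `f` lies in the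
image of the embedding `D^{p,q} = Hom(m^{⊗q}, m^{⊗p}) ↪ C^{p,q}`,
`f' ↦ i^{⊗p} ∘ f' ∘ π^{⊗q}`. -/
def FactorsThroughAug (p q : ℕ) (f : T K B q →ₗ[K] T K B p) : Prop :=
  ∃ f' : PiTensorProduct K (fun _ : Fin q => aug K B) →ₗ[K]
      PiTensorProduct K (fun _ : Fin p => aug K B),
    f = PiTensorProduct.map (fun _ : Fin p => (aug K B).subtype) ∘ₗ f' ∘ₗ
          PiTensorProduct.map (fun _ : Fin q => projAug K B)

open PiTensorProduct LinearMap

variable {K B}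

theorem split_tprod (n : ℕ) (c : Fin (n+1) → B) :
    split K B n (tprod K c) = c 0 ⊗ₜ[K] tprod K (fun i => c i.succ) := by
  simp only [split, LinearEquiv.trans_apply, PiTensorProduct.reindex_tprod,
    PiTensorProduct.tmulEquiv_symm_apply, TensorProduct.congr_tmul,
    PiTensorProduct.subsingletonEquiv_apply_tprod, LinearEquiv.refl_apply]
  congr 1
  congr 1
  funext i
  congr 1
  apply Fin.ext
  simp [finSumFinEquiv_symm_apply_natAdd]

theorem splitLast_tprod (n : ℕ) (c : Fin (n+1) → B) :
    splitLast K B n (tprod K c)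
      = tprod K (fun i : Fin n => c i.castSucc) ⊗ₜ[K] c (Fin.last n) := by
  simp only [splitLast, LinearEquiv.trans_apply, PiTensorProduct.reindex_tprod,
    PiTensorProduct.tmulEquiv_symm_apply, TensorProduct.congr_tmul,
    PiTensorProduct.subsingletonEquiv_apply_tprod, LinearEquiv.refl_apply]
  congr 1

theorem split_symm_tmul (n : ℕ) (b : B) (d : Fin n → B) :
    (split K B n).symm (b ⊗ₜ[K] tprod K d) = PiTensorProduct.tprod K (Fin.cons b d) := by
  apply (split K B n).injective
  rw [LinearEquiv.apply_symm_apply, split_tprod]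
  simp [Fin.cons_succ]

theorem splitLast_symm_tmul (n : ℕ) (d : Fin n → B) (b : B) :
    (splitLast K B n).symm (tprod K d ⊗ₜ[K] b) = PiTensorProduct.tprod K (Fin.snoc d b) := by
  apply (splitLast K B n).injective
  rw [LinearEquiv.apply_symm_apply, splitLast_tprod]
  simp [Fin.snoc_castSucc, Fin.snoc_last]

theorem one_T (n : ℕ) : (1 : T K B n) = tprod K (fun _ => 1) := rfl

theorem iterComul_one (p : ℕ) : iterComul K B p (1 : B) = 1 := by
  induction p with
  | zero =>
      rw [one_T]
      simp only [iterComul, LinearMap.comp_apply, LinearEquiv.coe_coe, Bialgebra.counit_one]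
      apply (PiTensorProduct.isEmptyEquiv (Fin 0)).injective
      simp [PiTensorProduct.isEmptyEquiv_apply_tprod]
  | succ p ih =>
      simp only [iterComul, LinearMap.comp_apply, LinearEquiv.coe_coe, Bialgebra.comul_one]
      rw [Algebra.TensorProduct.one_def, LinearMap.lTensor_tmul, ih, one_T, split_symm_tmul]
      rw [one_T]
      congr 1
      funext i
      refine Fin.cases ?_ ?_ i <;> simp

theorem lam_symm (p : ℕ) (b : B) (x : T K B p) :
    lamMap K B p ((split K B p).symm (b ⊗ₜ[K] x)) = iterComul K B p b * x := by
  simp only [lamMap, LinearMap.comp_apply, LinearEquiv.coe_coe,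
    LinearEquiv.apply_symm_apply, TensorProduct.map_tmul, LinearMap.mul'_apply, LinearMap.id_coe,
    id_eq]

theorem rho_symm (p : ℕ) (x : T K B p) (b : B) :
    rhoMap K B p ((splitLast K B p).symm (x ⊗ₜ[K] b)) = x * iterComul K B p b := by
  simp only [rhoMap, LinearMap.comp_apply, LinearEquiv.coe_coe,
    LinearEquiv.apply_symm_apply, TensorProduct.map_tmul, LinearMap.mul'_apply, LinearMap.id_coe,
    id_eq]

/-- The family obtained from `c` by multiplying entries `i` and `i+1`. -/
noncomputable def delMul {q : ℕ} (c : Fin (q+1) → B) (i : ℕ) : Fin q → B :=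
  fun j => if (j : ℕ) < i then c j.castSucc
    else if (j : ℕ) = i then c j.castSucc * c j.succ else c j.succ

theorem mulAt_tprod : ∀ (q i : ℕ), i < q → ∀ (c : Fin (q+1) → B),
    mulAt K B q i (tprod K c) = tprod K (delMul c i)
  | 0, i, hi => by omega
  | (q+1), 0, _ => by
      intro c
      simp only [mulAt, LinearMap.comp_apply, LinearEquiv.coe_coe, split_tprod,
        LinearMap.lTensor_tmul, TensorProduct.assoc_symm_tmul, LinearMap.rTensor_tmul,
        LinearMap.mul'_apply, split_symm_tmul]
      congr 1
      funext j
      refine Fin.cases ?_ (fun k => ?_) j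
      · simp [delMul, Fin.castSucc_zero]
      · simp only [Fin.cons_succ, delMul, Fin.val_succ]
        rw [if_neg (by omega), if_neg (by omega)]
  | (q+1), (i+1), hi => by
      intro c
      simp only [mulAt, LinearMap.comp_apply, LinearEquiv.coe_coe, split_tprod,
        LinearMap.lTensor_tmul]
      rw [mulAt_tprod q i (by omega), split_symm_tmul]
      congr 1
      funext j
      refine Fin.cases ?_ (fun k => ?_) j
      · simp [delMul]
      · simp only [Fin.cons_succ, delMul, Fin.val_succ]
        have hcs : k.castSucc.succ = k.succ.castSucc := (Fin.succ_castSucc k)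
        rcases lt_trichotomy (k : ℕ) i with h | h | h
        · rw [if_pos h, if_pos (by omega), hcs]
        · rw [if_neg (by omega), if_pos (by omega), if_neg (by omega),
            if_pos (by omega), hcs]
        · rw [if_neg (by omega), if_neg (by omega), if_neg (by omega),
            if_neg (by omega)]

theorem projAug_apply (b : B) :
    (projAug K B b : B) = b - algebraMap K B (Coalgebra.counit b) := rfl

theorem projAug_one : projAug K B (1 : B) = 0 := by
  apply Subtype.ext
  rw [projAug_apply]
  simp

theorem projAug_subtype (x : aug K B) : projAug K B ((aug K B).subtype x) = x := by
  apply Subtype.ext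
  rw [Submodule.subtype_apply, projAug_apply]
  have hx : Coalgebra.counit (R := K) (x : B) = 0 := x.2
  rw [hx]
  simp

variable (K B)
/-- The inclusion `m^{⊗n} → B^{⊗n}`. -/
noncomputable abbrev iotaT (n : ℕ) :
    PiTensorProduct K (fun _ : Fin n => aug K B) →ₗ[K] T K B n :=
  PiTensorProduct.map (fun _ : Fin n => (aug K B).subtype)

/-- The projection `B^{⊗n} → m^{⊗n}`. -/
noncomputable abbrev projT (n : ℕ) :
    T K B n →ₗ[K] PiTensorProduct K (fun _ : Fin n => aug K B) :=
  PiTensorProduct.map (fun _ : Fin n => projAug K B)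

theorem projT_comp_iotaT (n : ℕ) : projT K B n ∘ₗ iotaT K B n = LinearMap.id := by
  rw [← PiTensorProduct.map_comp]
  have : (fun _ : Fin n => projAug K B ∘ₗ (aug K B).subtype)
      = fun _ : Fin n => (LinearMap.id : aug K B →ₗ[K] aug K B) := by
    funext i
    ext x
    exact congrArg Subtype.val (projAug_subtype (K := K) (B := B) x)
  rw [this, PiTensorProduct.map_id]

theorem mul_mem_aug (b : B) (x : aug K B) : b * (x : B) ∈ aug K B := by
  have hx : Coalgebra.counit (R := K) (x : B) = 0 := x.2
  simp [aug, LinearMap.mem_ker, Bialgebra.counit_mul, hx]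

theorem aug_mem_mul (x : aug K B) (b : B) : (x : B) * b ∈ aug K B := by
  have hx : Coalgebra.counit (R := K) (x : B) = 0 := x.2
  simp [aug, LinearMap.mem_ker, Bialgebra.counit_mul, hx]

theorem mul_mem_rangeI (n : ℕ) (z w : T K B n) (hw : w ∈ LinearMap.range (iotaT K B n)) :
    z * w ∈ LinearMap.range (iotaT K B n) := by
  rw [PiTensorProduct.map_range_eq_span_tprod] at hw ⊢
  induction hw using Submodule.span_induction with
  | mem w hwm =>
      obtain ⟨m, rfl⟩ := hwm
      have hz : z ∈ (⊤ : Submodule K (T K B n)) := trivial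
      rw [← PiTensorProduct.span_tprod_eq_top] at hz
      induction hz using Submodule.span_induction with
      | mem z hzm =>
          obtain ⟨b, rfl⟩ := hzm
          rw [PiTensorProduct.tprod_mul_tprod]
          exact Submodule.subset_span
            ⟨fun i => ⟨b i * (m i : B), mul_mem_aug K B _ _⟩, rfl⟩
      | zero => rw [zero_mul]; exact Submodule.zero_mem _
      | add u v _ _ hu hv => rw [add_mul]; exact Submodule.add_mem _ hu hv
      | smul k u _ hu => rw [smul_mul_assoc]; exact Submodule.smul_mem _ _ hu
  | zero => rw [mul_zero]; exact Submodule.zero_mem _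
  | add u v _ _ hu hv => rw [mul_add]; exact Submodule.add_mem _ hu hv
  | smul k u _ hu => rw [mul_smul_comm]; exact Submodule.smul_mem _ _ hu

theorem rangeI_mul (n : ℕ) (w z : T K B n) (hw : w ∈ LinearMap.range (iotaT K B n)) :
    w * z ∈ LinearMap.range (iotaT K B n) := by
  rw [PiTensorProduct.map_range_eq_span_tprod] at hw ⊢
  induction hw using Submodule.span_induction with
  | mem w hwm =>
      obtain ⟨m, rfl⟩ := hwm
      have hz : z ∈ (⊤ : Submodule K (T K B n)) := trivial
      rw [← PiTensorProduct.span_tprod_eq_top] at hz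
      induction hz using Submodule.span_induction with
      | mem z hzm =>
          obtain ⟨b, rfl⟩ := hzm
          rw [PiTensorProduct.tprod_mul_tprod]
          exact Submodule.subset_span
            ⟨fun i => ⟨(m i : B) * b i, aug_mem_mul K B _ _⟩, rfl⟩
      | zero => rw [mul_zero]; exact Submodule.zero_mem _
      | add u v _ _ hu hv => rw [mul_add]; exact Submodule.add_mem _ hu hv
      | smul k u _ hu => rw [mul_smul_comm]; exact Submodule.smul_mem _ _ hu
  | zero => rw [zero_mul]; exact Submodule.zero_mem _
  | add u v _ _ hu hv => rw [add_mul]; exact Submodule.add_mem _ hu hv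
  | smul k u _ hu => rw [smul_mul_assoc]; exact Submodule.smul_mem _ _ hu

theorem deltaH_mem_rangeI (p q : ℕ) (f : T K B q →ₗ[K] T K B p)
    (hf : FactorsThroughAug K B p q f) (v : T K B (q+1)) :
    deltaH K B p q f v ∈ LinearMap.range (iotaT K B p) := by
  obtain ⟨f', hf'⟩ := hf
  have hfr : ∀ y : T K B q, f y ∈ LinearMap.range (iotaT K B p) := by
    intro y
    rw [hf']
    exact ⟨f' (projT K B q y), rfl⟩
  have h1 : ∀ w : B ⊗[K] T K B q,
      lamMap K B p ((split K B p).symm (LinearMap.lTensor B f w))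
        ∈ LinearMap.range (iotaT K B p) := by
    intro w
    induction w with
    | zero =>
        rw [(LinearMap.lTensor B f).map_zero, (split K B p).symm.map_zero,
          (lamMap K B p).map_zero]
        exact Submodule.zero_mem _
    | tmul b y =>
        rw [LinearMap.lTensor_tmul, lam_symm]
        exact mul_mem_rangeI K B p _ _ (hfr y)
    | add u w hu hw =>
        rw [(LinearMap.lTensor B f).map_add, (split K B p).symm.map_add,
          (lamMap K B p).map_add]
        exact Submodule.add_mem _ hu hw
  have h3 : ∀ w : T K B q ⊗[K] B,
      rhoMap K B p ((splitLast K B p).symm (LinearMap.rTensor B f w))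
        ∈ LinearMap.range (iotaT K B p) := by
    intro w
    induction w with
    | zero =>
        rw [(LinearMap.rTensor B f).map_zero, (splitLast K B p).symm.map_zero,
          (rhoMap K B p).map_zero]
        exact Submodule.zero_mem _
    | tmul y b =>
        rw [LinearMap.rTensor_tmul, rho_symm]
        exact rangeI_mul K B p _ _ (hfr y)
    | add u w hu hw =>
        rw [(LinearMap.rTensor B f).map_add, (splitLast K B p).symm.map_add,
          (rhoMap K B p).map_add]
        exact Submodule.add_mem _ hu hw
  have zs : ∀ (k : ℤ) (x : T K B p), x ∈ LinearMap.range (iotaT K B p) →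
      k • x ∈ LinearMap.range (iotaT K B p) := fun k x hx =>
    AddSubgroup.zsmul_mem (LinearMap.range (iotaT K B p)).toAddSubgroup hx k
  simp only [deltaH, LinearMap.add_apply, LinearMap.sum_apply, LinearMap.smul_apply,
    LinearMap.comp_apply, LinearEquiv.coe_coe]
  refine Submodule.add_mem _ (Submodule.add_mem _ (h1 _) (Submodule.sum_mem _ ?_)) (zs _ _ (h3 _))
  intro i _
  exact zs _ _ (hfr _)

theorem deltaH_tprod (p q : ℕ) (f : T K B q →ₗ[K] T K B p) (c : Fin (q+1) → B) :
    deltaH K B p q f (tprod K c)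
      = iterComul K B p (c 0) * f (tprod K (fun i => c i.succ))
        + ∑ i ∈ Finset.range q, ((-1 : ℤ) ^ (i + 1)) • f (mulAt K B q i (tprod K c))
        + ((-1 : ℤ) ^ (q + 1)) •
            (f (tprod K (fun i : Fin q => c i.castSucc)) * iterComul K B p (c (Fin.last q))) := by
  have hs : ∀ (k : ℤ) (g : T K B (q+1) →ₗ[K] T K B p) (x : T K B (q+1)), (k • g) x = k • g x :=
    fun _ _ _ => rfl
  simp only [deltaH, LinearMap.add_apply, LinearMap.sum_apply, LinearMap.smul_apply,
    LinearMap.comp_apply, LinearEquiv.coe_coe, split_tprod, splitLast_tprod,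
    LinearMap.lTensor_tmul, LinearMap.rTensor_tmul, lam_symm, rho_symm, hs]

theorem factors_vanish (p q : ℕ) (f : T K B q →ₗ[K] T K B p)
    (hf : FactorsThroughAug K B p q f) (e : Fin q → B) (j : Fin q) (he : e j = 1) :
    f (tprod K e) = 0 := by
  obtain ⟨f', rfl⟩ := hf
  simp only [LinearMap.comp_apply, PiTensorProduct.map_tprod]
  rw [MultilinearMap.map_coord_zero (PiTensorProduct.tprod K) j
    (show projAug K B (e j) = 0 by rw [he, projAug_one]), map_zero, map_zero]

theorem deltaH_vanish (p q0 : ℕ) (f : T K B (q0+1) →ₗ[K] T K B p)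
    (hfn : ∀ (e : Fin (q0+1) → B) (j : Fin (q0+1)), e j = 1 → f (tprod K e) = 0)
    (c : Fin (q0+2) → B) (j0 : Fin (q0+2)) (hc : c j0 = 1) :
    deltaH K B p (q0+1) f (tprod K c) = 0 := by
  rw [deltaH_tprod]
  have hj0 : (j0 : ℕ) < q0 + 2 := j0.isLt
  rcases Nat.lt_trichotomy (j0 : ℕ) 0 with h0 | h0 | hpos
  · omega
  · -- j0 = 0
    have hc0 : c 0 = 1 := by
      rw [show (0 : Fin (q0+2)) = j0 from Fin.ext (by simp [h0.symm]; omega)]; exact hc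
    have hinit : f (tprod K (fun i : Fin (q0+1) => c i.castSucc)) = 0 := by
      refine hfn _ 0 ?_
      show c (Fin.castSucc 0) = 1
      rw [Fin.castSucc_zero]; exact hc0
    have hd0 : delMul c 0 = fun i : Fin (q0+1) => c i.succ := by
      funext j
      rcases Nat.eq_zero_or_pos (j : ℕ) with h | h
      · have hj : j = 0 := Fin.ext (by simp [h])
        subst hj
        show delMul c 0 0 = c (Fin.succ 0)
        simp only [delMul, Fin.val_zero]
        rw [if_neg (lt_irrefl 0)]
        simp only [if_true, reduceIte]
        rw [Fin.castSucc_zero, hc0, one_mul]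
      · simp only [delMul]
        rw [if_neg (by omega), if_neg (by omega)]
    rw [Finset.sum_range_succ']
    have hmid : ∀ i ∈ Finset.range q0,
        ((-1 : ℤ) ^ ((i+1) + 1)) • f (mulAt K B (q0+1) (i+1) (tprod K c)) = 0 := by
      intro i hi
      rw [Finset.mem_range] at hi
      rw [mulAt_tprod (q0+1) (i+1) (by omega) c]
      rw [hfn (delMul c (i+1)) 0 ?_, zsmul_zero]
      show delMul c (i+1) 0 = 1
      simp only [delMul, Fin.val_zero]
      simp only [Nat.zero_lt_succ, ↓reduceIte, Fin.castSucc_zero]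
      exact hc0
    rw [Finset.sum_eq_zero hmid, mulAt_tprod (q0+1) 0 (by omega) c, hd0, hc0, iterComul_one,
      one_mul, hinit, zero_mul, zsmul_zero, pow_one, neg_one_smul]
    abel
  · rcases Nat.lt_trichotomy (j0 : ℕ) (q0 + 1) with hmidj | hlast | h
    · -- middle case : 0 < j0 < q0+1
      set j : ℕ := (j0 : ℕ) with hjdef
      have htail : f (tprod K (fun i : Fin (q0+1) => c i.succ)) = 0 := by
        refine hfn _ ⟨j - 1, by omega⟩ ?_
        show c (Fin.succ ⟨j-1, by omega⟩) = 1
        rw [show Fin.succ ⟨j-1, by omega⟩ = j0 from Fin.ext (by simp [Fin.val_succ]; omega)]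
        exact hc
      have hinit : f (tprod K (fun i : Fin (q0+1) => c i.castSucc)) = 0 := by
        refine hfn _ ⟨j, by omega⟩ ?_
        show c (Fin.castSucc ⟨j, by omega⟩) = 1
        rw [show Fin.castSucc ⟨j, by omega⟩ = j0 from Fin.ext (by simp; exact hjdef)]
        exact hc
      have hDD : delMul c j = delMul c (j - 1) := by
        funext jj
        simp only [delMul]
        rcases Nat.lt_trichotomy (jj : ℕ) (j - 1) with h1 | h1 | h1
        · rw [if_pos (by omega), if_pos (by omega)]
        · rw [if_pos (by omega), if_neg (by omega), if_pos (by omega)]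
          have hs : c jj.succ = 1 := by
            rw [show jj.succ = j0 from Fin.ext (by simp [Fin.val_succ]; omega)]
            exact hc
          rw [hs, mul_one]
        · rcases Nat.lt_trichotomy (jj : ℕ) j with h2 | h2 | h2
          · omega
          · rw [if_neg (by omega), if_pos (by omega), if_neg (by omega), if_neg (by omega)]
            have hcs : c jj.castSucc = 1 := by
              rw [show jj.castSucc = j0 from Fin.ext (by simp; omega)]
              exact hc
            rw [hcs, one_mul]
          · rw [if_neg (by omega), if_neg (by omega), if_neg (by omega), if_neg (by omega)]
      set F := f (tprod K (delMul c (j - 1))) with hFdef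
      have hsum : ∀ i ∈ Finset.range (q0 + 1),
          ((-1 : ℤ) ^ (i + 1)) • f (mulAt K B (q0+1) i (tprod K c))
            = (if i = j - 1 then ((-1 : ℤ) ^ j) • F else 0)
              + (if i = j then -(((-1 : ℤ) ^ j) • F) else 0) := by
        intro i hi
        rw [Finset.mem_range] at hi
        rw [mulAt_tprod (q0+1) i hi c]
        by_cases hij : i = j - 1
        · subst hij
          rw [if_pos rfl, if_neg (by omega), add_zero, ← hFdef,
            show (j - 1) + 1 = j from by omega]
        · by_cases hij2 : i = j
          · subst hij2
            rw [if_neg (by omega), if_pos rfl, zero_add, hDD, ← hFdef, pow_succ,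
              mul_neg_one, neg_smul]
          · rw [if_neg hij, if_neg hij2, add_zero]
            rcases Nat.lt_or_ge i (j - 1) with h1 | h1
            · rw [hfn (delMul c i) ⟨j - 1, by omega⟩ ?_, zsmul_zero]
              show delMul c i ⟨j-1, by omega⟩ = 1
              simp only [delMul]
              rw [if_neg (show ¬ ((j:ℕ)-1 < i) by omega), if_neg (show ¬ ((j:ℕ)-1 = i) by omega)]
              rw [show Fin.succ ⟨j-1, by omega⟩ = j0 from Fin.ext (by simp [Fin.val_succ]; omega)]
              exact hc
            · have h2 : j < i := by omega
              rw [hfn (delMul c i) ⟨j, by omega⟩ ?_, zsmul_zero]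
              show delMul c i ⟨j, by omega⟩ = 1
              simp only [delMul]
              rw [if_pos (show (j:ℕ) < i by omega)]
              rw [show Fin.castSucc ⟨j, by omega⟩ = j0 from Fin.ext (by simp; exact hjdef)]
              exact hc
      rw [Finset.sum_congr rfl hsum, Finset.sum_add_distrib, Finset.sum_ite_eq'
        (Finset.range (q0+1)) (j-1), Finset.sum_ite_eq' (Finset.range (q0+1)) j,
        if_pos (Finset.mem_range.mpr (by omega)), if_pos (Finset.mem_range.mpr (by omega)),
        htail, hinit, mul_zero, zero_mul, zsmul_zero]
      abel
    · -- j0 = last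
      have hcl : c (Fin.last (q0+1)) = 1 := by
        rw [show Fin.last (q0+1) = j0 from Fin.ext (by simp [hlast.symm])]
        exact hc
      have htail : f (tprod K (fun i : Fin (q0+1) => c i.succ)) = 0 := by
        refine hfn _ (Fin.last q0) ?_
        show c (Fin.succ (Fin.last q0)) = 1
        rw [Fin.succ_last]
        exact hcl
      have hdlast : delMul c q0 = fun i : Fin (q0+1) => c i.castSucc := by
        funext jj
        simp only [delMul]
        rcases Nat.lt_trichotomy (jj : ℕ) q0 with h1 | h1 | h1
        · rw [if_pos h1]
        · rw [if_neg (by omega), if_pos h1]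
          have hs : c jj.succ = 1 := by
            rw [show jj.succ = Fin.last (q0+1) from Fin.ext (by simp [Fin.val_succ]; omega)]
            exact hcl
          rw [hs, mul_one]
        · omega
      rw [Finset.sum_range_succ]
      have hmid : ∀ i ∈ Finset.range q0,
          ((-1 : ℤ) ^ (i + 1)) • f (mulAt K B (q0+1) i (tprod K c)) = 0 := by
        intro i hi
        rw [Finset.mem_range] at hi
        rw [mulAt_tprod (q0+1) i (by omega) c]
        rw [hfn (delMul c i) (Fin.last q0) ?_, zsmul_zero]
        show delMul c i (Fin.last q0) = 1
        simp only [delMul]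
        rw [if_neg (by simp [Fin.val_last]; omega), if_neg (by simp [Fin.val_last]; omega)]
        rw [show Fin.succ (Fin.last q0) = Fin.last (q0+1) from Fin.succ_last q0]
        exact hcl
      rw [Finset.sum_eq_zero hmid, mulAt_tprod (q0+1) q0 (by omega) c, hdlast, hcl,
        iterComul_one, mul_one, htail, mul_zero]
      simp only [pow_succ, mul_neg_one, neg_smul, neg_neg]
      abel
    · omega

/-- The span of pure tensors having some factor equal to `1`. -/
noncomputable def Wone (n : ℕ) : Submodule K (T K B n) :=
  Submodule.span K {x : T K B n | ∃ e : Fin n → B, (∃ j, e j = 1) ∧ tprod K e = x}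

theorem tprod_one_entry_mem (n : ℕ) (e : Fin n → B) (j : Fin n) (k : K)
    (he : e j = k • (1 : B)) : tprod K e ∈ Wone K B n := by
  have h1 : e = Function.update e j (k • (1 : B)) := by
    rw [← he, Function.update_eq_self]
  rw [h1, MultilinearMap.map_update_smul]
  exact Submodule.smul_mem _ _ (Submodule.subset_span
    ⟨Function.update e j 1, ⟨j, Function.update_self j 1 e⟩, rfl⟩)

theorem tprod_sub_proj_mem (n : ℕ) (c : Fin n → B) :
    tprod K c - tprod K (fun i => c i - algebraMap K B (Coalgebra.counit (c i)))
      ∈ Wone K B n := by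
  classical
  set a : Fin n → B := fun i => c i - algebraMap K B (Coalgebra.counit (c i)) with ha
  set d : Fin n → B := fun i => algebraMap K B (Coalgebra.counit (c i)) with hd
  have hc : c = a + d := by funext i; simp [ha, hd]
  have hexp : tprod K c = tprod K a
      + ∑ s ∈ (Finset.univ : Finset (Finset (Fin n))).erase Finset.univ,
          tprod K (s.piecewise a d) := by
    conv_lhs => rw [hc]
    rw [MultilinearMap.map_add_univ]
    rw [← Finset.add_sum_erase _ _ (Finset.mem_univ (Finset.univ : Finset (Fin n)))]
    rw [Finset.piecewise_univ]
  rw [hexp]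
  rw [add_sub_cancel_left]
  refine Submodule.sum_mem _ ?_
  intro s hs
  have hs' : s ≠ Finset.univ := (Finset.mem_erase.mp hs).1
  have : ∃ j, j ∉ s := by
    by_contra hcon
    push_neg at hcon
    exact hs' (Finset.eq_univ_iff_forall.mpr hcon)
  obtain ⟨j, hj⟩ := this
  refine tprod_one_entry_mem K B n _ j (Coalgebra.counit (c j)) ?_
  rw [Finset.piecewise_eq_of_notMem _ _ _ hj, hd]
  simp [Algebra.algebraMap_eq_smul_one]

theorem deltaH_comp_E (p q0 : ℕ) (f : T K B (q0+1) →ₗ[K] T K B p)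
    (hf : FactorsThroughAug K B p (q0+1) f) (v : T K B (q0+2)) :
    deltaH K B p (q0+1) f (iotaT K B (q0+2) (projT K B (q0+2) v))
      = deltaH K B p (q0+1) f v := by
  have hker : Wone K B (q0+2) ≤ LinearMap.ker (deltaH K B p (q0+1) f) := by
    rw [Wone, Submodule.span_le]
    rintro x ⟨e, ⟨j, hj⟩, rfl⟩
    exact deltaH_vanish K B p q0 f (fun e' j' h => factors_vanish K B p (q0+1) f hf e' j' h)
      e j hj
  have key : ∀ c : Fin (q0+2) → B,
      deltaH K B p (q0+1) f (iotaT K B (q0+2) (projT K B (q0+2) (tprod K c)))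
        = deltaH K B p (q0+1) f (tprod K c) := by
    intro c
    rw [PiTensorProduct.map_tprod, PiTensorProduct.map_tprod]
    have harg : (fun i => (aug K B).subtype (projAug K B (c i)))
        = fun i => c i - algebraMap K B (Coalgebra.counit (c i)) := by
      funext i
      rw [Submodule.subtype_apply, projAug_apply]
    rw [harg]
    have := hker (tprod_sub_proj_mem K B (q0+2) c)
    rw [LinearMap.mem_ker, map_sub, sub_eq_zero] at this
    exact this.symm
  have hmaps : deltaH K B p (q0+1) f ∘ₗ (iotaT K B (q0+2) ∘ₗ projT K B (q0+2))
      = deltaH K B p (q0+1) f := by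
    apply PiTensorProduct.ext
    apply MultilinearMap.ext
    intro c
    simp only [LinearMap.compMultilinearMap_apply, LinearMap.comp_apply]
    exact key c
  calc deltaH K B p (q0+1) f (iotaT K B (q0+2) (projT K B (q0+2) v))
      = (deltaH K B p (q0+1) f ∘ₗ (iotaT K B (q0+2) ∘ₗ projT K B (q0+2))) v := rfl
    _ = deltaH K B p (q0+1) f v := by rw [hmaps]

/-- If `f ∈ C^{p,q} = Hom(B^{⊗q}, B^{⊗p})` factors through the
augmentation ideal `m = ker ε` (i.e. lies in the image of `D^{p,q} ↪ C^{p,q}`), then so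
does its horizontal differential `δ_h^{p,q}(f)`. -/
theorem deltaH_factorsThroughAug (p q : ℕ) (hp : 1 ≤ p) (hq : 1 ≤ q)
    (f : T K B q →ₗ[K] T K B p) (hf : FactorsThroughAug K B p q f) :
    FactorsThroughAug K B p (q + 1) (deltaH K B p q f) := by
  obtain ⟨q0, rfl⟩ : ∃ q0, q = q0 + 1 := ⟨q - 1, by omega⟩
  refine ⟨projT K B p ∘ₗ deltaH K B p (q0+1) f ∘ₗ iotaT K B (q0+2), ?_⟩
  apply LinearMap.ext
  intro v
  simp only [LinearMap.comp_apply]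
  show deltaH K B p (q0+1) f v
    = iotaT K B p (projT K B p (deltaH K B p (q0+1) f (iotaT K B (q0+2) (projT K B (q0+2) v))))
  rw [deltaH_comp_E K B p q0 f hf v]
  obtain ⟨u, hu⟩ := deltaH_mem_rangeI K B p (q0+1) f hf v
  rw [← hu]
  have h2 : projT K B p (iotaT K B p u) = u := by
    rw [← LinearMap.comp_apply, projT_comp_iotaT]
    rfl
  rw [h2]

end GBD
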